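/- Suppose Ψ: 𝔻 → ℂ and φ: 𝔻 → 𝔻 are holomorphic and the weighted composition operator W_{Ψ,φ}f = Ψ·(f∘φ) on H²₂(𝔻) is complex symmetric with conjugation J, (Jf)(z) = conj(f(conj z)). Then φ(z) = a₀ + a₁·q(z)/p(z) and Ψ(z) = a₂·p(z), where a₀ = φ(0), a₁ = φ′(0), a₂ = 3888·Ψ(0), p(z) = (2/243)∑_{n≥0}((n+1)/(n+2)⁵)a₀ⁿzⁿ, and q(z) = (1/32)∑_{n≥1}(n(n+1)/(n+2)⁵)a₀^{n−1}zⁿ. -/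

import Mathlib

/-- `kfun u v = K_{conj u}(v) = ∑ ((n+1)/(n+2)⁵)(u·v)ⁿ`. -/
noncomputable def kfun (u v : ℂ) : ℂ :=
  ∑' n : ℕ, (((n : ℂ) + 1) / ((n : ℂ) + 2) ^ 5) * (u * v) ^ n

/-- `p(z) = (2/243) ∑_{n≥0} ((n+1)/(n+2)⁵) a₀ⁿ zⁿ`. -/
noncomputable def pfun (a₀ z : ℂ) : ℂ :=
  (2 / 243) * ∑' n : ℕ, (((n : ℂ) + 1) / ((n : ℂ) + 2) ^ 5) * a₀ ^ n * z ^ n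

/-- `q(z) = (1/32) ∑_{n≥1} (n(n+1)/(n+2)⁵) a₀^{n-1} zⁿ`. -/
noncomputable def qfun (a₀ z : ℂ) : ℂ :=
  (1 / 32) * ∑' n : ℕ, ((n : ℂ) * ((n : ℂ) + 1) / ((n : ℂ) + 2) ^ 5) * a₀ ^ (n - 1) * z ^ n

open Metric

lemma cnorm (n : ℕ) :
    ‖(((n : ℂ) + 1) / ((n : ℂ) + 2) ^ 5)‖ = ((n : ℝ) + 1) / ((n : ℝ) + 2) ^ 5 := by
  have h1 : ((n : ℂ) + 1) = ((((n : ℝ) + 1) : ℝ) : ℂ) := by push_cast; ring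
  have h2 : ((n : ℂ) + 2) = ((((n : ℝ) + 2) : ℝ) : ℂ) := by push_cast; ring
  rw [h1, h2, ← Complex.ofReal_pow, ← Complex.ofReal_div, Complex.norm_real,
    Real.norm_eq_abs, abs_of_nonneg (by positivity)]

lemma cnorm_le_one (n : ℕ) : ‖(((n : ℂ) + 1) / ((n : ℂ) + 2) ^ 5)‖ ≤ 1 := by
  rw [cnorm]
  rw [div_le_one (by positivity)]
  have hn : (0 : ℝ) ≤ n := Nat.cast_nonneg n
  have h : ((n : ℝ) + 2) ≤ ((n : ℝ) + 2) ^ 5 := le_self_pow₀ (by linarith) (by norm_num)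
  linarith

lemma summable_k {t : ℂ} (ht : ‖t‖ < 1) :
    Summable (fun n : ℕ => (((n : ℂ) + 1) / ((n : ℂ) + 2) ^ 5) * t ^ n) := by
  apply Summable.of_norm_bounded (summable_geometric_of_lt_one (norm_nonneg t) ht)
  intro n
  rw [norm_mul, norm_pow]
  calc ‖(((n : ℂ) + 1) / ((n : ℂ) + 2) ^ 5)‖ * ‖t‖ ^ n ≤ 1 * ‖t‖ ^ n := by
        gcongr; exact cnorm_le_one n
    _ = ‖t‖ ^ n := one_mul _

lemma kfun_symm (u v : ℂ) : kfun u v = kfun v u := by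
  unfold kfun; rw [mul_comm u v]

lemma kfun_zero (u : ℂ) : kfun u 0 = 1 / 32 := by
  unfold kfun
  rw [tsum_eq_single 0 (by intro n hn; simp [zero_pow hn])]
  norm_num

lemma kfun_eq_pfun (a z : ℂ) : kfun a z = (243 / 2) * pfun a z := by
  unfold kfun pfun
  rw [← mul_assoc]
  norm_num
  exact tsum_congr fun n => by rw [mul_pow]; ring

lemma telescope_ineq (i : ℕ) :
    ((i : ℝ) + 3) / ((i : ℝ) + 4) ^ 5
      ≤ 1 / (3 * ((i : ℝ) + 3) ^ 3) - 1 / (3 * ((i : ℝ) + 4) ^ 3) := by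
  have hn : (0 : ℝ) ≤ i := Nat.cast_nonneg i
  set x : ℝ := (i : ℝ) with hx
  rw [div_sub_div _ _ (by positivity) (by positivity),
    div_le_div_iff₀ (by positivity) (by positivity)]
  ring_nf
  nlinarith [sq_nonneg x, pow_pos (show (0:ℝ) < x + 3 by linarith) 3,
    pow_pos (show (0:ℝ) < x + 4 by linarith) 3]

lemma kfun_ne {a z : ℂ} (ha : ‖a‖ < 1) (hz : ‖z‖ < 1) : kfun a z ≠ 0 := by
  set t : ℂ := a * z with htdef
  have ht : ‖t‖ < 1 := by
    rw [htdef, norm_mul]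
    have h1 : ‖a‖ * ‖z‖ ≤ ‖a‖ * 1 := by gcongr
    have h2 : (0:ℝ) ≤ ‖a‖ := norm_nonneg a
    nlinarith
  set f : ℕ → ℂ := fun n => (((n : ℂ) + 1) / ((n : ℂ) + 2) ^ 5) * t ^ n with hf
  have hs : Summable f := summable_k ht
  have h0 : kfun a z = f 0 + ∑' n, f (n + 1) := hs.tsum_eq_zero_add
  have hf0 : f 0 = 1 / 32 := by simp [hf]; norm_num
  have hbound1 : ‖f 1‖ ≤ 2 / 243 := by
    have he : ‖f 1‖ = 2 / 243 * ‖t‖ := by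
      rw [hf]; simp only [norm_mul, cnorm]; norm_num
    rw [he]
    nlinarith [ht.le, norm_nonneg t]
  have hbound2 : ∀ i : ℕ,
      ‖f (i + 2)‖ ≤ 1 / (3 * ((i : ℝ) + 3) ^ 3) - 1 / (3 * ((i : ℝ) + 4) ^ 3) := by
    intro i
    have he : ‖f (i + 2)‖ = ((i : ℝ) + 3) / ((i : ℝ) + 4) ^ 5 * ‖t‖ ^ (i + 2) := by
      rw [hf]
      simp only [norm_mul, norm_pow, cnorm]
      push_cast
      ring_nf
    have h2 : ‖t‖ ^ (i + 2) ≤ 1 := pow_le_one₀ (norm_nonneg t) ht.le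
    have h1 : ‖f (i + 2)‖ ≤ ((i : ℝ) + 3) / ((i : ℝ) + 4) ^ 5 := by
      rw [he]
      exact mul_le_of_le_one_right (by positivity) h2
    exact h1.trans (telescope_ineq i)
  have htail : ‖∑' n, f (n + 1)‖ ≤ 5 / 243 := by
    have hs1 : Summable fun n => f (n + 1) := (summable_nat_add_iff 1).mpr hs
    calc ‖∑' n, f (n + 1)‖ ≤ ∑' n, ‖f (n + 1)‖ := norm_tsum_le_tsum_norm hs1.norm
      _ ≤ 5 / 243 := by
        apply Real.tsum_le_of_sum_range_le (fun n => norm_nonneg _)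
        intro N
        match N with
        | 0 => simp; norm_num
        | (K + 1) =>
          rw [Finset.sum_range_succ']
          have hT : ∑ i ∈ Finset.range K, ‖f (i + 1 + 1)‖
              ≤ ∑ i ∈ Finset.range K,
                (1 / (3 * ((i : ℝ) + 3) ^ 3) - 1 / (3 * ((i : ℝ) + 4) ^ 3)) :=
            Finset.sum_le_sum fun i _ => hbound2 i
          have hTel : ∑ i ∈ Finset.range K,
                (1 / (3 * ((i : ℝ) + 3) ^ 3) - 1 / (3 * ((i : ℝ) + 4) ^ 3))
              = 1 / (3 * ((0 : ℝ) + 3) ^ 3) - 1 / (3 * ((K : ℝ) + 3) ^ 3) := by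
            have := Finset.sum_range_sub' (f := fun i => 1 / (3 * ((i : ℝ) + 3) ^ 3)) K
            push_cast at this ⊢
            convert this using 2 <;> push_cast <;> ring_nf
          have hpos : (0 : ℝ) ≤ 1 / (3 * ((K : ℝ) + 3) ^ 3) := by positivity
          have := hT.trans_eq hTel
          have h5 : (1 : ℝ) / (3 * ((0 : ℝ) + 3) ^ 3) = 1 / 81 := by norm_num
          linarith [hbound1]
  intro hzero
  rw [hzero] at h0
  have hneg : f 0 = -∑' n, f (n + 1) := by linear_combination -h0
  have hnorm : ‖f 0‖ ≤ 5 / 243 := by rw [hneg, norm_neg]; exact htail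
  rw [hf0] at hnorm
  have h132 : ‖(1 / 32 : ℂ)‖ = 1 / 32 := by
    rw [show (1 / 32 : ℂ) = ((1 / 32 : ℝ) : ℂ) by norm_num, Complex.norm_real,
      Real.norm_eq_abs]
    norm_num
  rw [h132] at hnorm
  norm_num at hnorm

lemma summable_aux {r : ℝ} (hr0 : 0 < r) (hr1 : r < 1) :
    Summable (fun n : ℕ => (n : ℝ) * r ^ (n - 1)) := by
  have hs := summable_pow_mul_geometric_of_norm_lt_one (R := ℝ) 1
    (by rwa [Real.norm_eq_abs, abs_of_pos hr0])
  apply ((hs.mul_left (1 / r)).congr)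
  intro n
  match n with
  | 0 => simp
  | (m + 1) =>
    simp only [pow_one, pow_succ, Nat.add_sub_cancel]
    field_simp

lemma hasDerivAt_kfun (v : ℂ) (hv : ‖v‖ ≤ 1) {r : ℝ} (hr0 : 0 < r) (hr1 : r < 1) {x : ℂ}
    (hx : x ∈ Metric.ball (0 : ℂ) r) :
    HasDerivAt (fun u => kfun u v)
      (∑' n : ℕ, ((((n : ℂ) + 1) / ((n : ℂ) + 2) ^ 5) * v ^ n) * ((n : ℂ) * x ^ (n - 1))) x := by
  have heq : (fun u => kfun u v)
      = fun u => ∑' n : ℕ, ((((n : ℂ) + 1) / ((n : ℂ) + 2) ^ 5) * v ^ n) * u ^ n := by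
    funext u; unfold kfun; exact tsum_congr fun n => by rw [mul_pow]; ring
  rw [heq]
  apply hasDerivAt_tsum_of_isPreconnected (u := fun n : ℕ => (n : ℝ) * r ^ (n - 1))
    (summable_aux hr0 hr1) Metric.isOpen_ball (convex_ball (0:ℂ) r).isPreconnected
    (y₀ := 0) ?_ ?_ (by simpa using hr0) ?_ hx
  · intro n y _
    exact (hasDerivAt_pow n y).const_mul _
  · intro n y hy
    rw [norm_mul, norm_mul, norm_mul, norm_pow, norm_pow]
    have hy' : ‖y‖ ≤ r := (mem_ball_zero_iff.1 hy).le
    have h1 : ‖(((n : ℂ) + 1) / ((n : ℂ) + 2) ^ 5)‖ * ‖v‖ ^ n ≤ 1 := by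
      calc ‖(((n : ℂ) + 1) / ((n : ℂ) + 2) ^ 5)‖ * ‖v‖ ^ n
          ≤ 1 * 1 ^ n := by gcongr; exact cnorm_le_one n
        _ = 1 := by norm_num
    have h2 : ‖(n : ℂ)‖ * ‖y‖ ^ (n - 1) ≤ (n : ℝ) * r ^ (n - 1) := by
      rw [Complex.norm_natCast]
      gcongr
    calc ‖(((n : ℂ) + 1) / ((n : ℂ) + 2) ^ 5)‖ * ‖v‖ ^ n * (‖(n : ℂ)‖ * ‖y‖ ^ (n - 1))
        ≤ 1 * ((n : ℝ) * r ^ (n - 1)) := by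
          apply mul_le_mul h1 h2 (by positivity) (by norm_num)
      _ = (n : ℝ) * r ^ (n - 1) := one_mul _
  · apply summable_of_ne_finset_zero (s := {0})
    intro n hn
    simp only [Finset.mem_singleton] at hn
    simp [zero_pow hn]

lemma hasDerivAt_kfun_zero (v : ℂ) (hv : ‖v‖ ≤ 1) :
    HasDerivAt (fun w => kfun w v) ((2 / 243) * v) 0 := by
  have h := hasDerivAt_kfun v hv (r := 1 / 2) (by norm_num) (by norm_num)
    (x := 0) (by simp)
  convert h using 1
  rw [tsum_eq_single 1 ?_]
  · norm_num
  · intro n hn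
    match n, hn with
    | 0, _ => simp
    | (m + 2), _ =>
      have : ((0 : ℂ)) ^ (m + 2 - 1) = 0 := by
        rw [zero_pow]; omega
      simp [this]

lemma D_eq (a z : ℂ) :
    (∑' n : ℕ, ((((n : ℂ) + 1) / ((n : ℂ) + 2) ^ 5) * z ^ n) * ((n : ℂ) * a ^ (n - 1)))
      = 32 * qfun a z := by
  unfold qfun
  rw [← mul_assoc]
  norm_num
  exact tsum_congr fun n => by ring

/-- If the weighted composition operator `W_{Ψ,φ}` on `H²₂(𝔻)` is complex symmetric
with the conjugation `J` — equivalently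
`Ψ(z)K_{conj w}(φ(z)) = Ψ(w)K_{conj(φ(w))}(z)` for all `w, z ∈ 𝔻` — then
`φ(z) = a₀ + a₁ q(z)/p(z)` and `Ψ(z) = a₂ p(z)`, where `a₀ = φ(0)`, `a₁ = φ′(0)`,
`a₂ = 3888 Ψ(0)`. (Here `Ψ(0) ≠ 0` rules out the degenerate operator `W = 0`.) -/
theorem stmt18 (Ψ φ : ℂ → ℂ)
    (hmap : Set.MapsTo φ (Metric.ball (0 : ℂ) 1) (Metric.ball (0 : ℂ) 1))
    (hφ : DifferentiableOn ℂ φ (Metric.ball (0 : ℂ) 1))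
    (hΨ : DifferentiableOn ℂ Ψ (Metric.ball (0 : ℂ) 1))
    (hΨ0 : Ψ 0 ≠ 0)
    (hsym : ∀ z ∈ Metric.ball (0 : ℂ) 1, ∀ w ∈ Metric.ball (0 : ℂ) 1,
      Ψ z * kfun w (φ z) = Ψ w * kfun (φ w) z) :
    ∀ z ∈ Metric.ball (0 : ℂ) 1,
      φ z = φ 0 + deriv φ 0 * qfun (φ 0) z / pfun (φ 0) z ∧
      Ψ z = 3888 * Ψ 0 * pfun (φ 0) z := by
  intro z hz
  have h0mem : (0 : ℂ) ∈ Metric.ball (0 : ℂ) 1 := by simp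
  have ha0 : ‖φ 0‖ < 1 := mem_ball_zero_iff.1 (hmap h0mem)
  have hzn : ‖z‖ < 1 := mem_ball_zero_iff.1 hz
  have hφz : ‖φ z‖ < 1 := mem_ball_zero_iff.1 (hmap hz)
  have hΨeq : ∀ y ∈ Metric.ball (0 : ℂ) 1, Ψ y = 32 * Ψ 0 * kfun (φ 0) y := by
    intro y hy
    have h := hsym y hy 0 h0mem
    rw [kfun_symm, kfun_zero] at h
    linear_combination 32 * h
  have hΨconc : Ψ z = 3888 * Ψ 0 * pfun (φ 0) z := by
    rw [hΨeq z hz, kfun_eq_pfun]; ring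
  have h32 : (32 : ℂ) * Ψ 0 ≠ 0 := mul_ne_zero (by norm_num) hΨ0
  have hker : ∀ w ∈ Metric.ball (0 : ℂ) 1,
      kfun (φ 0) z * kfun w (φ z) = kfun (φ 0) w * kfun (φ w) z := by
    intro w hw
    have h := hsym z hz w hw
    rw [hΨeq z hz, hΨeq w hw] at h
    apply mul_left_cancel₀ h32
    linear_combination h
  have hφd : HasDerivAt φ (deriv φ 0) 0 :=
    (hφ.differentiableAt (Metric.isOpen_ball.mem_nhds h0mem)).hasDerivAt
  have hL : HasDerivAt (fun w => kfun (φ 0) z * kfun w (φ z))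
      (kfun (φ 0) z * ((2 / 243) * φ z)) 0 :=
    (hasDerivAt_kfun_zero (φ z) hφz.le).const_mul _
  have hR1 : HasDerivAt (fun w => kfun (φ 0) w) ((2 / 243) * φ 0) 0 := by
    have hfe : (fun w => kfun (φ 0) w) = fun w => kfun w (φ 0) :=
      funext fun w => kfun_symm _ _
    rw [hfe]
    exact hasDerivAt_kfun_zero _ ha0.le
  set r : ℝ := (1 + ‖φ 0‖) / 2 with hrdef
  have hr0 : 0 < r := by rw [hrdef]; positivity
  have hr1 : r < 1 := by rw [hrdef]; linarith
  have hφr : φ 0 ∈ Metric.ball (0 : ℂ) r := mem_ball_zero_iff.2 (by rw [hrdef]; linarith)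
  have hR2 : HasDerivAt (fun w => kfun (φ w) z) (32 * qfun (φ 0) z * deriv φ 0) 0 := by
    have hg := hasDerivAt_kfun z hzn.le hr0 hr1 hφr
    have h := hg.comp 0 hφd
    rw [D_eq] at h
    exact h
  have hR := hR1.mul hR2
  have hev : (fun w => kfun (φ 0) z * kfun w (φ z))
      =ᶠ[nhds (0 : ℂ)] (fun w => kfun (φ 0) w * kfun (φ w) z) := by
    filter_upwards [Metric.isOpen_ball.mem_nhds h0mem] with w hw
    exact hker w hw
  have hL' := hR.congr_of_eventuallyEq hev
  have hkey := hL.unique hL'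
  have hk0 : kfun (φ 0) 0 = 1 / 32 := kfun_zero _
  have hkp : kfun (φ 0) z = (243 / 2) * pfun (φ 0) z := kfun_eq_pfun _ _
  rw [hk0, hkp] at hkey
  have hp : pfun (φ 0) z ≠ 0 := by
    intro h
    exact kfun_ne ha0 hzn (by rw [hkp, h, mul_zero])
  refine ⟨?_, hΨconc⟩
  field_simp
  linear_combination hkey
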